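/- Let N ≥ 2, let A be a Hermitian N×N complex matrix with τ = tr A, let v ∈ ℂ^N be a unit vector with α = ⟨v, A v⟩, and assume α > 0, τ > 0 and Nα > τ. Then the Choi matrix Z_A = (1/α)·A ⊗ P + (1/(N/τ − 1/α))·(𝟙 − A/α) ⊗ (𝟙/τ − P/α) is positive semidefinite if and only if both A ≥ ((τ − α)/(N − 1))·𝟙 and α·𝟙 ≥ A hold in the Loewner (positive semidefinite) order. -/

import Mathlib

open Matrix Kronecker ComplexOrder

lemma conjT_kron {n m : Type*} [Fintype n] [Fintype m] (B : Matrix n n ℂ) (C : Matrix m m ℂ) :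
    (B ⊗ₖ C)ᴴ = Bᴴ ⊗ₖ Cᴴ := by
  ext ⟨i, j⟩ ⟨k, l⟩
  simp [Matrix.conjTranspose_apply, Matrix.kroneckerMap_apply, star_mul', mul_comm]

lemma psd_kron {n m : Type*} [Fintype n] [Fintype m] [DecidableEq n] [DecidableEq m]
    {B : Matrix n n ℂ} {C : Matrix m m ℂ} (hB : B.PosSemidef) (hC : C.PosSemidef) :
    (B ⊗ₖ C).PosSemidef := by
  exact hB.kronecker hC

lemma qf_kron {n m : Type*} [Fintype n] [Fintype m] (B : Matrix n n ℂ) (C : Matrix m m ℂ)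
    (x : n → ℂ) (u : m → ℂ) :
    star (fun p : n × m => x p.1 * u p.2) ⬝ᵥ (B ⊗ₖ C) *ᵥ (fun p : n × m => x p.1 * u p.2)
      = (star x ⬝ᵥ B *ᵥ x) * (star u ⬝ᵥ C *ᵥ u) := by
  have hmv : ∀ i j, ((B ⊗ₖ C) *ᵥ (fun p : n × m => x p.1 * u p.2)) (i,j)
      = (B *ᵥ x) i * (C *ᵥ u) j := by
    intro i j
    simp only [Matrix.mulVec, dotProduct, Matrix.kroneckerMap_apply, Fintype.sum_prod_type]
    rw [Fintype.sum_mul_sum]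
    exact Finset.sum_congr rfl fun k _ => Finset.sum_congr rfl fun l _ => by ring
  simp only [dotProduct, Fintype.sum_prod_type, Pi.star_apply, star_mul']
  rw [Fintype.sum_mul_sum]
  refine Finset.sum_congr rfl fun i _ => Finset.sum_congr rfl fun j _ => ?_
  rw [hmv i j]; ring

lemma c_mul_nonneg (c : ℝ) (hc : 0 ≤ c) {z : ℂ} (hz : 0 ≤ z) : 0 ≤ (c : ℂ) * z :=
  mul_nonneg (by exact_mod_cast Complex.zero_le_real.mpr hc) hz

lemma nonneg_of_c_mul (c : ℝ) (hc : 0 < c) {z : ℂ} (h : 0 ≤ (c : ℂ) * z) : 0 ≤ z := by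
  rw [Complex.le_def] at h ⊢
  simp only [Complex.mul_re, Complex.mul_im, Complex.ofReal_re, Complex.ofReal_im,
    Complex.zero_re, Complex.zero_im, zero_mul, mul_zero, sub_zero, add_zero, zero_add] at h ⊢
  obtain ⟨h1, h2⟩ := h
  constructor
  · nlinarith
  · rcases mul_eq_zero.mp h2.symm with h | h
    · exact absurd h (ne_of_gt hc)
    · exact h.symm

lemma smul_psd {n : Type*} [Fintype n] (c : ℝ) (hc : 0 ≤ c) {M : Matrix n n ℂ}
    (hM : M.PosSemidef) : ((c : ℂ) • M).PosSemidef := by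
  refine Matrix.PosSemidef.of_dotProduct_mulVec_nonneg ?_ fun x => ?_
  · unfold Matrix.IsHermitian
    rw [Matrix.conjTranspose_smul, hM.1]
    congr 1
    simp
  · rw [Matrix.smul_mulVec, dotProduct_smul, smul_eq_mul]
    exact c_mul_nonneg c hc (hM.dotProduct_mulVec_nonneg x)

lemma qfP {n : Type*} [Fintype n] (v y : n → ℂ) :
    star y ⬝ᵥ (vecMulVec (star v) v) *ᵥ y = star (v ⬝ᵥ y) * (v ⬝ᵥ y) := by
  have h : (vecMulVec (star v) v) *ᵥ y = (v ⬝ᵥ y) • star v := by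
    ext i
    simp only [Matrix.mulVec, dotProduct, Matrix.vecMulVec_apply, Pi.smul_apply,
      Pi.star_apply, smul_eq_mul, Finset.sum_mul, Finset.mul_sum]
    exact Finset.sum_congr rfl fun j _ => by ring
  rw [h, dotProduct_smul, smul_eq_mul, Matrix.star_dotProduct_star]
  ring

lemma P_herm {n : Type*} [Fintype n] (v : n → ℂ) : (vecMulVec (star v) v).IsHermitian := by
  ext i j
  simp [Matrix.conjTranspose_apply, Matrix.vecMulVec_apply, star_mul', mul_comm]

lemma P_psd {n : Type*} [Fintype n] (v : n → ℂ) : (vecMulVec (star v) v).PosSemidef :=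
  Matrix.PosSemidef.of_dotProduct_mulVec_nonneg (P_herm v) fun x => by rw [qfP]; exact star_mul_self_nonneg _

lemma P_mul_P {n : Type*} [Fintype n] (v : n → ℂ) (hv : star v ⬝ᵥ v = 1) :
    vecMulVec (star v) v * vecMulVec (star v) v = vecMulVec (star v) v := by
  ext i j
  rw [Matrix.mul_apply]
  have h1 : ∑ k, vecMulVec (star v) v i k * vecMulVec (star v) v k j
      = (star v ⬝ᵥ v) * vecMulVec (star v) v i j := by
    simp only [dotProduct, Finset.sum_mul, Matrix.vecMulVec_apply]
    exact Finset.sum_congr rfl fun k _ => by ring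
  rw [h1, hv, one_mul]

lemma oneSubP_psd {n : Type*} [Fintype n] [DecidableEq n] (v : n → ℂ) (hv : star v ⬝ᵥ v = 1) :
    ((1 : Matrix n n ℂ) - vecMulVec (star v) v).PosSemidef := by
  have key : ((1 : Matrix n n ℂ) - vecMulVec (star v) v)ᴴ *
      ((1 : Matrix n n ℂ) - vecMulVec (star v) v) = (1 : Matrix n n ℂ) - vecMulVec (star v) v := by
    rw [Matrix.conjTranspose_sub, Matrix.conjTranspose_one, P_herm v, sub_mul, one_mul,
      mul_sub, mul_one, P_mul_P v hv]
    simp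
  rw [← key]
  exact Matrix.posSemidef_conjTranspose_mul_self _

lemma real_smul_one_herm {n : Type*} [Fintype n] [DecidableEq n] (c : ℝ) :
    ((c : ℂ) • (1 : Matrix n n ℂ)).IsHermitian := by
  unfold Matrix.IsHermitian
  rw [Matrix.conjTranspose_smul, Matrix.conjTranspose_one]
  congr 1
  simp

lemma exists_orth (N : ℕ) (hN : 2 ≤ N) (v : Fin N → ℂ) :
    ∃ u : Fin N → ℂ, u ≠ 0 ∧ v ⬝ᵥ u = 0 := by
  have h0 : (0:ℕ) < N := by omega
  have h1 : (1:ℕ) < N := by omega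
  set i0 : Fin N := ⟨0, h0⟩
  set i1 : Fin N := ⟨1, h1⟩
  have hne : i0 ≠ i1 := by simp [i0, i1, Fin.ext_iff]
  by_cases hv0 : v i0 = 0
  · refine ⟨Pi.single i0 1, ?_, ?_⟩
    · intro h
      have := congr_fun h i0
      simp at this
    · rw [dotProduct_single, hv0, zero_mul]
  · refine ⟨Pi.single i0 (v i1) + Pi.single i1 (-(v i0)), ?_, ?_⟩
    · intro h
      have := congr_fun h i1
      simp [Pi.single_apply, hne.symm, hne] at this
      exact hv0 this
    · rw [dotProduct_add, dotProduct_single, dotProduct_single]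
      ring

lemma star_dot_self_real {n : Type*} [Fintype n] (u : n → ℂ) (hu : u ≠ 0) :
    ∃ ρ : ℝ, 0 < ρ ∧ star u ⬝ᵥ u = (ρ : ℂ) := by
  have hpos : 0 < star u ⬝ᵥ u := Matrix.dotProduct_star_self_pos_iff.mpr hu
  rw [Complex.lt_def] at hpos
  refine ⟨(star u ⬝ᵥ u).re, by simpa using hpos.1, ?_⟩
  apply Complex.ext
  · simp
  · simp [← hpos.2]

/-- For `N ≥ 2`, `A` Hermitian with trace `τ`, `v` a unit vector with
`α = ⟨v, A v⟩`, and `α > 0`, `τ > 0`, `N·α > τ`, the Choi matrix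
`Z_A = (1/α)·A ⊗ P + (1/(N/τ − 1/α))·(𝟙 − A/α) ⊗ (𝟙/τ − P/α)` (with `P = v̄ v̄*`)
is positive semidefinite iff `A ≥ ((τ − α)/(N − 1))·𝟙` and `α·𝟙 ≥ A`. -/
theorem choi_posSemidef_iff (N : ℕ) (hN : 2 ≤ N)
    (A : Matrix (Fin N) (Fin N) ℂ) (hA : A.IsHermitian)
    (v : Fin N → ℂ) (hv : star v ⬝ᵥ v = 1)
    (τ α : ℝ) (hτ : A.trace = (τ : ℂ)) (hα : star v ⬝ᵥ A.mulVec v = (α : ℂ))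
    (hα0 : 0 < α) (hτ0 : 0 < τ) (hNα : τ < (N : ℝ) * α)
    (P : Matrix (Fin N) (Fin N) ℂ) (hP : P = vecMulVec (star v) v)
    (Z : Matrix (Fin N × Fin N) (Fin N × Fin N) ℂ)
    (hZ : Z = ((α : ℂ))⁻¹ • (A ⊗ₖ P) +
      ((((N : ℝ) / τ - 1 / α : ℝ) : ℂ))⁻¹ •
        ((1 - ((α : ℂ))⁻¹ • A) ⊗ₖ (((τ : ℂ))⁻¹ • 1 - ((α : ℂ))⁻¹ • P))) :
    Z.PosSemidef ↔
      ((A - ((((τ - α) / ((N : ℝ) - 1)) : ℝ) : ℂ) • 1).PosSemidef ∧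
        (((α : ℝ) : ℂ) • 1 - A).PosSemidef) := by
  have hNR : (2:ℝ) ≤ (N:ℝ) := by exact_mod_cast hN
  have hβ : (0:ℝ) < (N:ℝ)*α - τ := by linarith
  have hN1 : (0:ℝ) < (N:ℝ) - 1 := by linarith
  have hαC : (α:ℂ) ≠ 0 := Complex.ofReal_ne_zero.mpr hα0.ne'
  have hτC : (τ:ℂ) ≠ 0 := Complex.ofReal_ne_zero.mpr hτ0.ne'
  have hβC : ((N:ℂ)*(α:ℂ) - (τ:ℂ)) ≠ 0 := by
    have h := Complex.ofReal_ne_zero.mpr hβ.ne'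
    push_cast at h
    exact h
  have hN1C : ((N:ℂ) - 1) ≠ 0 := by
    have h := Complex.ofReal_ne_zero.mpr hN1.ne'
    push_cast at h
    exact h
  have hmixR : (N:ℝ)/τ - 1/α = ((N:ℝ)*α - τ)/(τ*α) := by
    field_simp
  have hmixRne : ((N:ℝ)/τ - 1/α) ≠ 0 := by
    rw [hmixR]
    exact (div_pos hβ (mul_pos hτ0 hα0)).ne'
  have hmixC : ((N:ℂ)/(τ:ℂ) - 1/(α:ℂ)) ≠ 0 := by
    have h := Complex.ofReal_ne_zero.mpr hmixRne
    push_cast at h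
    exact h
  set c1 : ℝ := ((N:ℝ) - 1) / ((N:ℝ)*α - τ) with hc1
  set c2 : ℝ := 1 / ((N:ℝ)*α - τ) with hc2
  have hc1pos : 0 < c1 := div_pos hN1 hβ
  have hc2pos : 0 < c2 := by positivity
  set M1 := A - ((((τ - α) / ((N:ℝ) - 1)) : ℝ) : ℂ) • (1 : Matrix (Fin N) (Fin N) ℂ) with hM1
  set M2 := ((α : ℝ) : ℂ) • (1 : Matrix (Fin N) (Fin N) ℂ) - A with hM2
  have hv' : v ⬝ᵥ star v = 1 := by rw [dotProduct_comm]; exact hv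
  have key : Z = (c1 : ℂ) • (M1 ⊗ₖ P) +
      (c2 : ℂ) • (M2 ⊗ₖ ((1 : Matrix (Fin N) (Fin N) ℂ) - P)) := by
    rw [hZ, hM1, hM2, hc1, hc2]
    ext ⟨i, j⟩ ⟨k, l⟩
    simp only [Matrix.add_apply, Matrix.smul_apply, Matrix.sub_apply, Matrix.kroneckerMap_apply,
      Matrix.one_apply, smul_eq_mul]
    push_cast
    generalize (if i = k then (1:ℂ) else 0) = d1
    generalize (if j = l then (1:ℂ) else 0) = d2
    have hβC' : (α:ℂ)*N - τ ≠ 0 := by rw [mul_comm]; exact hβC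
    field_simp
    ring
  have hPpsd : P.PosSemidef := by rw [hP]; exact P_psd v
  have h1Ppsd : ((1 : Matrix (Fin N) (Fin N) ℂ) - P).PosSemidef := by
    rw [hP]; exact oneSubP_psd v hv
  have hq : ∀ x u : Fin N → ℂ,
      star (fun p : Fin N × Fin N => x p.1 * u p.2) ⬝ᵥ Z *ᵥ (fun p : Fin N × Fin N => x p.1 * u p.2)
        = (c1:ℂ) * ((star x ⬝ᵥ M1 *ᵥ x) * (star u ⬝ᵥ P *ᵥ u)) +
          (c2:ℂ) * ((star x ⬝ᵥ M2 *ᵥ x) *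
            (star u ⬝ᵥ ((1 : Matrix (Fin N) (Fin N) ℂ) - P) *ᵥ u)) := by
    intro x u
    rw [key, Matrix.add_mulVec, Matrix.smul_mulVec, Matrix.smul_mulVec,
      dotProduct_add, dotProduct_smul, dotProduct_smul, smul_eq_mul,
      smul_eq_mul, qf_kron, qf_kron]
  constructor
  · intro hZp
    have hM1herm : M1.IsHermitian := hA.sub (real_smul_one_herm _)
    have hM2herm : M2.IsHermitian := (real_smul_one_herm _).sub hA
    constructor
    · refine Matrix.PosSemidef.of_dotProduct_mulVec_nonneg hM1herm fun x => ?_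
      have h0 := hZp.dotProduct_mulVec_nonneg (fun p : Fin N × Fin N => x p.1 * (star v) p.2)
      rw [hq x (star v)] at h0
      have e1 : star (star v) ⬝ᵥ P *ᵥ (star v) = 1 := by
        rw [hP, qfP, hv']
        simp
      have e2 : star (star v) ⬝ᵥ ((1 : Matrix (Fin N) (Fin N) ℂ) - P) *ᵥ (star v) = 0 := by
        rw [Matrix.sub_mulVec, dotProduct_sub, Matrix.one_mulVec, e1, star_star, hv']
        simp
      rw [e1, e2] at h0
      simp only [mul_one, mul_zero, add_zero] at h0
      exact nonneg_of_c_mul c1 hc1pos h0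
    · refine Matrix.PosSemidef.of_dotProduct_mulVec_nonneg hM2herm fun x => ?_
      obtain ⟨u, hu0, huv⟩ := exists_orth N hN v
      obtain ⟨ρ, hρ, hρe⟩ := star_dot_self_real u hu0
      have h0 := hZp.dotProduct_mulVec_nonneg (fun p : Fin N × Fin N => x p.1 * u p.2)
      rw [hq x u] at h0
      have e1 : star u ⬝ᵥ P *ᵥ u = 0 := by
        rw [hP, qfP, huv]
        simp
      have e2 : star u ⬝ᵥ ((1 : Matrix (Fin N) (Fin N) ℂ) - P) *ᵥ u = (ρ:ℂ) := by
        rw [Matrix.sub_mulVec, dotProduct_sub, Matrix.one_mulVec, e1, hρe, sub_zero]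
      rw [e1, e2] at h0
      simp only [mul_zero, zero_add] at h0
      have hconv : ((c2 * ρ : ℝ) : ℂ) * (star x ⬝ᵥ M2 *ᵥ x)
          = (c2:ℂ) * ((star x ⬝ᵥ M2 *ᵥ x) * (ρ:ℂ)) := by push_cast; ring
      apply nonneg_of_c_mul (c2 * ρ) (mul_pos hc2pos hρ)
      rw [hconv]
      exact h0
  · rintro ⟨h1, h2⟩
    rw [key]
    exact Matrix.PosSemidef.add (smul_psd c1 hc1pos.le (psd_kron h1 hPpsd))
      (smul_psd c2 hc2pos.le (psd_kron h2 h1Ppsd))
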